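/- Define S_{C1,C2}(x) = Σ_{m,n≥0} q^{2·C(m+1,2)+C(n+1,2)+mn+C1·m+C2·n} x^{m+n} / ((q;q)_m (q;q)_n). Then S_{0,0}(x) = S_{0,0}(xq) + (xq+xq²) S_{1,0}(xq) and S_{1,0}(x) = S_{0,0}(xq) + xq S_{1,0}(xq). -/

import Mathlib

noncomputable section

/-- Base coefficient ring: formal Laurent series over ℚ (a field), so that
integer powers of `q` and inverses of Pochhammer symbols make sense. -/
abbrev R : Type := LaurentSeries ℚ

/-- The formal variable `q`. -/
def q : R := HahnSeries.single 1 1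

/-- The finite q-Pochhammer symbol `(a; b)_n = ∏_{j=1}^n (1 - a b^(j-1))`. -/
def poch (a b : R) (n : ℕ) : R := ∏ j ∈ Finset.range n, (1 - a * b ^ j)

/-- Formal substitution `x ↦ c·x` in a power series in `x` over `R`. -/
def subst (c : R) (f : PowerSeries R) : PowerSeries R :=
  PowerSeries.mk fun k => c ^ k * PowerSeries.coeff k f

/-- `S_{C1,C2}(x) = Σ_{m,n} q^{2C(m+1,2)+C(n+1,2)+mn+C1 m+C2 n} x^{{m+n}}
/((q;q)_m (q;q)_n)`, as a power series in `x` over `R`. -/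
def S (C1 C2 : ℤ) : PowerSeries R :=
  PowerSeries.mk fun k =>
    ∑ p ∈ (Finset.range (k+1) ×ˢ Finset.range (k+1)).filter
        (fun p => p.1 + p.2 = k),
      q ^ (2 * ((p.1+1).choose 2 : ℤ) + ((p.2+1).choose 2 : ℤ)
            + (p.1 : ℤ) * (p.2 : ℤ) + C1 * (p.1 : ℤ) + C2 * (p.2 : ℤ))
        * (poch q q p.1)⁻¹ * (poch q q p.2)⁻¹

/-! ### Auxiliary lemmas -/

/-- The general term of `S`. -/
def t (C1 C2 : ℤ) (m n : ℕ) : R :=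
  q ^ (2 * ((m+1).choose 2 : ℤ) + ((n+1).choose 2 : ℤ)
        + (m : ℤ) * (n : ℤ) + C1 * (m : ℤ) + C2 * (n : ℤ))
    * (poch q q m)⁻¹ * (poch q q n)⁻¹

lemma q_ne : (q : R) ≠ 0 := by simp [q]

lemma one_sub_q_pow_ne (m : ℕ) : (1 : R) - q ^ (m+1) ≠ 0 := by
  intro h
  have h0 : ((1 : R) - q ^ (m+1)).coeff 0 = 1 := by
    rw [q, HahnSeries.single_pow]
    simp [HahnSeries.coeff_sub, HahnSeries.coeff_single]
    omega
  rw [h] at h0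
  simp at h0

lemma poch_succ (m : ℕ) : poch q q (m+1) = poch q q m * (1 - q ^ (m+1)) := by
  rw [poch, Finset.prod_range_succ, ← pow_succ']
  rfl

lemma inv_cancel (m : ℕ) :
    (1 - q ^ (m+1)) * (poch q q (m+1))⁻¹ = (poch q q m)⁻¹ := by
  rw [poch_succ, mul_inv, ← mul_assoc, mul_comm ((1:R) - q^(m+1)), mul_assoc,
    mul_inv_cancel₀ (one_sub_q_pow_ne m), mul_one]

lemma choose_shift (m : ℕ) : ((m+2).choose 2 : ℤ) = ((m+1).choose 2 : ℤ) + (m+1) := by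
  rw [show m+2 = (m+1)+1 from rfl, Nat.choose_succ_succ]
  push_cast [Nat.choose_one_right]
  ring

lemma coeff_S (C1 C2 : ℤ) (k : ℕ) :
    PowerSeries.coeff k (S C1 C2) = ∑ p ∈ Finset.HasAntidiagonal.antidiagonal k, t C1 C2 p.1 p.2 := by
  rw [S, PowerSeries.coeff_mk]
  apply Finset.sum_congr
  · ext p
    simp only [Finset.mem_filter, Finset.mem_product, Finset.mem_range,
      Finset.HasAntidiagonal.mem_antidiagonal]
    omega
  · intro p _
    rfl

lemma key1 (m n : ℕ) :
    (1 - q ^ (m+1)) * t 0 0 (m+1) n = q ^ ((m:ℤ) + n + 2) * t 1 0 m n := by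
  unfold t
  rw [show (m:ℕ)+1+1 = m+2 from rfl, choose_shift]
  have he : 2 * (((m+1).choose 2 : ℤ) + (m+1)) + ((n+1).choose 2 : ℤ)
        + ((m:ℕ)+1 : ℤ) * (n : ℤ) + 0 * ((m:ℕ)+1 : ℤ) + 0 * (n : ℤ)
      = ((m:ℤ) + n + 2)
        + (2 * ((m+1).choose 2 : ℤ) + ((n+1).choose 2 : ℤ)
            + (m : ℤ) * (n : ℤ) + 1 * (m : ℤ) + 0 * (n : ℤ)) := by
    push_cast
    ring
  rw [show (((m:ℕ)+1 : ℕ) : ℤ) = ((m:ℕ)+1 : ℤ) by push_cast; ring] at *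
  rw [he, zpow_add₀ q_ne, ← inv_cancel m]
  ring

lemma key2 (m n : ℕ) :
    q ^ (m:ℕ) * ((1 - q ^ (n+1)) * t 0 0 m (n+1)) = q ^ ((m:ℤ) + n + 1) * t 1 0 m n := by
  unfold t
  rw [show (n:ℕ)+1+1 = n+2 from rfl, choose_shift]
  have he : 2 * ((m+1).choose 2 : ℤ) + (((n+1).choose 2 : ℤ) + (n+1))
        + (m : ℤ) * ((n:ℕ)+1 : ℤ) + 0 * (m : ℤ) + 0 * ((n:ℕ)+1 : ℤ)
      = ((n:ℤ) + 1)
        + (2 * ((m+1).choose 2 : ℤ) + ((n+1).choose 2 : ℤ)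
            + (m : ℤ) * (n : ℤ) + 1 * (m : ℤ) + 0 * (n : ℤ)) := by
    push_cast
    ring
  rw [show (((n:ℕ)+1 : ℕ) : ℤ) = ((n:ℕ)+1 : ℤ) by push_cast; ring] at *
  rw [he, zpow_add₀ q_ne,
    show (q:R) ^ ((n:ℤ) + 1) = q ^ (n:ℕ) * q by
      rw [show ((n:ℤ)+1) = ((n+1 : ℕ) : ℤ) by push_cast; ring, zpow_natCast, pow_succ],
    show (q:R) ^ ((m:ℤ) + (n:ℤ) + 1) = q ^ (m:ℕ) * q ^ (n:ℕ) * q by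
      rw [show ((m:ℤ)+(n:ℤ)+1) = ((m+n+1 : ℕ) : ℤ) by push_cast; ring, zpow_natCast,
        pow_add, pow_add, pow_one],
    ← inv_cancel n]
  ring

lemma t10_eq (m n : ℕ) : t 1 0 m n = q ^ (m:ℕ) * t 0 0 m n := by
  unfold t
  have he : 2 * ((m+1).choose 2 : ℤ) + ((n+1).choose 2 : ℤ)
        + (m : ℤ) * (n : ℤ) + 1 * (m : ℤ) + 0 * (n : ℤ)
      = (m : ℤ) + (2 * ((m+1).choose 2 : ℤ) + ((n+1).choose 2 : ℤ)
            + (m : ℤ) * (n : ℤ) + 0 * (m : ℤ) + 0 * (n : ℤ)) := by ring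
  rw [he, zpow_add₀ q_ne, zpow_natCast]
  ring

lemma sumA (k : ℕ) :
    ∑ p ∈ Finset.HasAntidiagonal.antidiagonal (k+1), (1 - q ^ p.1) * t 0 0 p.1 p.2
      = q ^ ((k:ℤ) + 2) * ∑ p ∈ Finset.HasAntidiagonal.antidiagonal k, t 1 0 p.1 p.2 := by
  rw [Finset.Nat.antidiagonal_succ, Finset.sum_cons, Finset.sum_map, Finset.mul_sum]
  simp only [Function.Embedding.coe_prodMap, Function.Embedding.coeFn_mk,
    Function.Embedding.refl_apply, Prod.map_fst, Prod.map_snd, Nat.succ_eq_add_one,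
    pow_zero, sub_self, zero_mul, zero_add]
  refine Finset.sum_congr rfl fun p hp => ?_
  rw [Finset.HasAntidiagonal.mem_antidiagonal] at hp
  rw [key1]
  congr 2
  push_cast
  omega

lemma sumB (k : ℕ) :
    ∑ p ∈ Finset.HasAntidiagonal.antidiagonal (k+1), q ^ p.1 * ((1 - q ^ p.2) * t 0 0 p.1 p.2)
      = q ^ ((k:ℤ) + 1) * ∑ p ∈ Finset.HasAntidiagonal.antidiagonal k, t 1 0 p.1 p.2 := by
  rw [Finset.Nat.antidiagonal_succ', Finset.sum_cons, Finset.sum_map, Finset.mul_sum]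
  simp only [Function.Embedding.coe_prodMap, Function.Embedding.coeFn_mk,
    Function.Embedding.refl_apply, Prod.map_fst, Prod.map_snd, Nat.succ_eq_add_one,
    pow_zero, sub_self, zero_mul, mul_zero, zero_add]
  refine Finset.sum_congr rfl fun p hp => ?_
  rw [Finset.HasAntidiagonal.mem_antidiagonal] at hp
  rw [key2]
  congr 2
  push_cast
  omega

lemma zpow_k2 (k : ℕ) : q ^ ((k:ℤ) + 2) = q ^ (k:ℕ) * q ^ (2:ℕ) := by
  rw [show ((k:ℤ)+2) = ((k+2 : ℕ) : ℤ) by push_cast; ring, zpow_natCast, pow_add]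

lemma zpow_k1 (k : ℕ) : q ^ ((k:ℤ) + 1) = q ^ (k:ℕ) * q := by
  rw [show ((k:ℤ)+1) = ((k+1 : ℕ) : ℤ) by push_cast; ring, zpow_natCast, pow_succ]

lemma t00_zero : t 0 0 0 0 = 1 := by
  unfold t poch
  norm_num

lemma t10_zero : t 1 0 0 0 = 1 := by
  unfold t poch
  norm_num

theorem functional_equation_system :
    S 0 0 = subst q (S 0 0)
        + (PowerSeries.X * PowerSeries.C q
            + PowerSeries.X * PowerSeries.C (q ^ 2)) * subst q (S 1 0) ∧
    S 1 0 = subst q (S 0 0) + PowerSeries.X * PowerSeries.C q * subst q (S 1 0) := by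
  have hsub : ∀ (f : PowerSeries R) (k : ℕ),
      PowerSeries.coeff k (subst q f) = q ^ k * PowerSeries.coeff k f := by
    intro f k
    rw [subst, PowerSeries.coeff_mk]
  constructor
  · refine PowerSeries.ext fun k => ?_
    rw [map_add, add_mul, map_add, hsub, mul_assoc, mul_assoc, coeff_S]
    cases k with
    | zero =>
      rw [PowerSeries.coeff_zero_X_mul, PowerSeries.coeff_zero_X_mul]
      simp [Finset.Nat.antidiagonal_zero, t00_zero]
    | succ k =>
      rw [PowerSeries.coeff_succ_X_mul, PowerSeries.coeff_succ_X_mul,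
        PowerSeries.coeff_C_mul, PowerSeries.coeff_C_mul, hsub, coeff_S]
      set T := ∑ p ∈ Finset.HasAntidiagonal.antidiagonal k, t 1 0 p.1 p.2 with hT
      have main : (∑ p ∈ Finset.HasAntidiagonal.antidiagonal (k+1), t 0 0 p.1 p.2)
          - q ^ (k+1) * ∑ p ∈ Finset.HasAntidiagonal.antidiagonal (k+1), t 0 0 p.1 p.2
          = q ^ (k:ℕ) * q ^ (2:ℕ) * T + q ^ (k:ℕ) * q * T := by
        rw [Finset.mul_sum, ← Finset.sum_sub_distrib]
        have step : ∀ p ∈ Finset.HasAntidiagonal.antidiagonal (k+1),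
            t 0 0 p.1 p.2 - q ^ (k+1) * t 0 0 p.1 p.2
              = (1 - q ^ p.1) * t 0 0 p.1 p.2
                + q ^ p.1 * ((1 - q ^ p.2) * t 0 0 p.1 p.2) := by
          intro p hp
          rw [Finset.HasAntidiagonal.mem_antidiagonal] at hp
          rw [← hp, pow_add]
          ring
        rw [Finset.sum_congr rfl step, Finset.sum_add_distrib, sumA, sumB,
          zpow_k2, zpow_k1, hT]
      linear_combination main
  · refine PowerSeries.ext fun k => ?_
    rw [map_add, hsub, mul_assoc, coeff_S]
    cases k with
    | zero =>
      rw [PowerSeries.coeff_zero_X_mul, coeff_S 0 0 0]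
      simp [Finset.Nat.antidiagonal_zero, t00_zero, t10_zero]
    | succ k =>
      rw [PowerSeries.coeff_succ_X_mul, PowerSeries.coeff_C_mul, hsub,
        coeff_S 0 0, coeff_S 1 0 k]
      set T := ∑ p ∈ Finset.HasAntidiagonal.antidiagonal k, t 1 0 p.1 p.2 with hT
      have main : (∑ p ∈ Finset.HasAntidiagonal.antidiagonal (k+1), t 1 0 p.1 p.2)
          - q ^ (k+1) * ∑ p ∈ Finset.HasAntidiagonal.antidiagonal (k+1), t 0 0 p.1 p.2
          = q ^ (k:ℕ) * q * T := by
        rw [Finset.mul_sum, ← Finset.sum_sub_distrib]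
        have step : ∀ p ∈ Finset.HasAntidiagonal.antidiagonal (k+1),
            t 1 0 p.1 p.2 - q ^ (k+1) * t 0 0 p.1 p.2
              = q ^ p.1 * ((1 - q ^ p.2) * t 0 0 p.1 p.2) := by
          intro p hp
          rw [Finset.HasAntidiagonal.mem_antidiagonal] at hp
          rw [t10_eq, ← hp, pow_add]
          ring
        rw [Finset.sum_congr rfl step, sumB, zpow_k1, hT]
      linear_combination main
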